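/- (Jarník) The set Bad of badly approximable real numbers, i.e. the set of x ∈ ℝ for which there exists c(x) > 0 such that |x − p/q| ≥ c(x)/q² for all rationals p/q (p ∈ ℤ, q ∈ ℕ, q ≥ 1), has Hausdorff dimension 1. -/

import Mathlib

/-- The distance from a real number to the nearest integer. -/
noncomputable def distToNearestInt (y : ℝ) : ℝ := |y - (round y : ℝ)|


open Finset Set
open scoped ENNReal NNReal

namespace JarnikAux

/-- levels scales: `δ M k = (8M)^{-k}`. -/
noncomputable def del (M k : ℕ) : ℝ := (((8 * M : ℕ) : ℝ) ^ k)⁻¹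

/-- Dangerous rationals at level `k`: denominators `q` with `(8M)^k ≤ 24 q² < (8M)^{k+1}`. -/
def Dang (M k : ℕ) : Set ℝ :=
  {r | ∃ p : ℤ, ∃ q : ℕ, 1 ≤ q ∧ (8 * M) ^ k ≤ 24 * q ^ 2 ∧ 24 * q ^ 2 < (8 * M) ^ (k + 1) ∧
    r = (p : ℝ) / (q : ℝ)}

/-- An index `i` is good for interval starting at `a` at level `k` if the `i`-th subinterval
stays `del M (k+1)`-away from all dangerous rationals of level `k`. -/
def good (M : ℕ) (a : ℝ) (k i : ℕ) : Prop :=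
  ∀ r ∈ Dang M k, ∀ x ∈ Icc (a + i * del M (k + 1)) (a + (i + 1) * del M (k + 1)),
    del M (k + 1) ≤ |x - r|

lemma N_cast_pos {M : ℕ} (hM : 1 ≤ M) : (0:ℝ) < ((8 * M : ℕ) : ℝ) := by
  have : 0 < 8 * M := by omega
  exact_mod_cast this

lemma del_pos {M : ℕ} (hM : 1 ≤ M) (k : ℕ) : 0 < del M k := by
  unfold del
  have := N_cast_pos hM
  positivity

lemma del_succ {M : ℕ} (hM : 1 ≤ M) (k : ℕ) :
    del M (k + 1) * ((8 * M : ℕ) : ℝ) = del M k := by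
  have := N_cast_pos hM
  unfold del
  rw [pow_succ]
  field_simp

lemma sep {M k : ℕ} {r r' : ℝ} (hr : r ∈ Dang M k) (hr' : r' ∈ Dang M k)
    (hne : r ≠ r') : 24 * del M (k + 1) < |r - r'| := by
  obtain ⟨p, q, hq1, -, hq2, rfl⟩ := hr
  obtain ⟨p', q', hq1', -, hq2', rfl⟩ := hr'
  have hq0 : (0:ℝ) < (q:ℝ) := by exact_mod_cast hq1
  have hq0' : (0:ℝ) < (q':ℝ) := by exact_mod_cast hq1'
  have hnum : p * (q' : ℤ) ≠ p' * (q : ℤ) := by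
    intro h
    apply hne
    field_simp
    exact_mod_cast h.trans (mul_comm _ _)
  have hnum1 : (1:ℝ) ≤ |((p * q' - p' * q : ℤ) : ℝ)| := by
    have : p * (q':ℤ) - p' * q ≠ 0 := sub_ne_zero.mpr hnum
    exact_mod_cast Int.one_le_abs (by exact_mod_cast this)
  have key : 24 * (q : ℕ) * q' < (8 * M) ^ (k + 1) := by
    by_contra hcon
    push_neg at hcon
    have : ((8*M)^(k+1))^2 ≤ (24 * q * q')^2 := Nat.pow_le_pow_left hcon 2
    nlinarith [hq2, hq2', sq_nonneg (q - q'), Nat.zero_le ((8*M)^(k+1))]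
  have heq : (p:ℝ)/q - (p':ℝ)/q' = ((p * q' - p' * q : ℤ) : ℝ) / ((q:ℝ) * q') := by
    field_simp
    push_cast
    ring
  have hsep : (1:ℝ) / ((q:ℝ) * q') ≤ |(p:ℝ)/q - (p':ℝ)/q'| := by
    rw [heq, abs_div, abs_of_pos (by positivity : (0:ℝ) < (q:ℝ)*q')]
    gcongr
  refine lt_of_lt_of_le ?_ hsep
  have h8 : 1 ≤ 8 * M := by
    rcases Nat.eq_zero_or_pos (8 * M) with h | h
    · exfalso; rw [h] at hq2; simp at hq2
    · exact h
  have hNk : (0:ℝ) < ((8 * M : ℕ) : ℝ) ^ (k + 1) := by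
    have : (0:ℝ) < ((8 * M : ℕ) : ℝ) := by exact_mod_cast h8
    positivity
  have hkey' : (24:ℝ) * ((q:ℝ) * (q':ℝ)) < (8 * (M:ℝ)) ^ (k + 1) := by
    have h2 : ((24 * q * q' : ℕ) : ℝ) < (((8 * M) ^ (k + 1) : ℕ) : ℝ) := Nat.cast_lt.mpr key
    push_cast at h2
    nlinarith [h2]
  rw [del, show (24:ℝ) * (((8*M:ℕ):ℝ)^(k+1))⁻¹ = 24 / ((8*M:ℕ):ℝ)^(k+1) by ring,
    div_lt_div_iff₀ hNk (by positivity : (0:ℝ) < (q:ℝ)*q')]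
  push_cast
  nlinarith [hkey']

open Classical in
noncomputable def goodSet (M : ℕ) (a : ℝ) (k : ℕ) : Finset ℕ :=
  (range (8 * M)).filter (fun i => Even i ∧ good M a k i)

lemma exists_good {M : ℕ} (hM : 4 ≤ M) (a : ℝ) (k : ℕ) : M ≤ (goodSet M a k).card := by
  classical
  have hM1 : 1 ≤ M := by omega
  set d := del M (k + 1) with hd_def
  have hd : 0 < d := del_pos hM1 _
  set s : Finset ℕ := (range (8 * M)).filter Even with hs
  have hsplit : (s.filter (fun i => good M a k i)).card
      + (s.filter (fun i => ¬ good M a k i)).card = s.card :=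
    Finset.card_filter_add_card_filter_not _
  have hgoodeq : (s.filter (fun i => good M a k i)).card = (goodSet M a k).card := by
    congr 1
    ext i
    simp only [goodSet, hs, Finset.mem_filter, Finset.mem_range]
    tauto
  have hscard : s.card = 4 * M := by
    have himg : s = (range (4 * M)).image (fun j => 2 * j) := by
      ext i
      simp only [hs, Finset.mem_filter, Finset.mem_range, Finset.mem_image, Even]
      constructor
      · rintro ⟨hi, r, rfl⟩; exact ⟨r, by omega, by omega⟩
      · rintro ⟨j, hj, rfl⟩; exact ⟨by omega, j, by omega⟩
    rw [himg, Finset.card_image_of_injective _ (fun x y h => by omega), Finset.card_range]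
  set E := s.filter (fun i => ¬ good M a k i) with hEdef
  have hw : ∀ i : ℕ, ∃ r : ℝ, i ∈ E → r ∈ Dang M k ∧
      ∃ x ∈ Icc (a + i * d) (a + (i + 1) * d), |x - r| < d := by
    intro i
    by_cases hi : i ∈ E
    · have hng : ¬ good M a k i := (Finset.mem_filter.mp hi).2
      rw [good] at hng
      push_neg at hng
      obtain ⟨r, hrD, x, hx, hlt⟩ := hng
      exact ⟨r, fun _ => ⟨hrD, x, hx, hlt⟩⟩
    · exact ⟨0, fun h => absurd h hi⟩
  choose R hR using hw
  set φ : ℕ → ℤ := fun i => ⌊(R i - a) / (24 * d)⌋ with hφdef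
  -- basic window facts for members of E
  have hwin : ∀ i ∈ E, i < 8 * M ∧ Even i ∧
      (a + i * d) - d < R i ∧ R i < (a + (i + 1) * d) + d := by
    intro i hi
    obtain ⟨hrD, x, hx, hlt⟩ := hR i hi
    have hi1 : i < 8 * M := by
      have := (Finset.mem_filter.mp ((Finset.mem_filter.mp hi).1)).1
      simpa using this
    have hiev : Even i := (Finset.mem_filter.mp ((Finset.mem_filter.mp hi).1)).2
    have h1 := hx.1
    have h2 := hx.2
    have habs := abs_lt.mp hlt
    exact ⟨hi1, hiev, by linarith [habs.2], by linarith [habs.1]⟩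
  have hmaps : ∀ i ∈ E, φ i ∈ Finset.Icc (-1 : ℤ) (M : ℤ) := by
    intro i hi
    obtain ⟨hi1, hiev, hlo, hhi⟩ := hwin i hi
    rw [Finset.mem_Icc]
    constructor
    · rw [hφdef]
      apply Int.le_floor.mpr
      rw [Int.cast_neg, Int.cast_one, le_div_iff₀ (by positivity)]
      have : (0:ℝ) ≤ (i:ℝ) * d := by positivity
      linarith
    · show ⌊(R i - a) / (24 * d)⌋ ≤ (M : ℤ)
      have h1 : (R i - a) / (24 * d) < (M : ℝ) + 1 := by
        rw [div_lt_iff₀ (by positivity)]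
        have hi8 : (i:ℝ) + 1 ≤ 8 * M := by
          have : (i:ℝ) + 1 ≤ (8 * M : ℕ) := by exact_mod_cast hi1
          push_cast at this
          linarith
        have hM4 : (4:ℝ) ≤ M := by exact_mod_cast hM
        nlinarith [hd]
      have hfl : ⌊(R i - a) / (24 * d)⌋ < (M : ℤ) + 1 := by
        apply Int.floor_lt.mpr
        push_cast
        exact h1
      omega
  have hfib : ∀ j ∈ Finset.Icc (-1 : ℤ) (M : ℤ),
      (E.filter (fun i => φ i = j)).card ≤ 2 := by
    intro j _
    by_cases hne2 : (E.filter (fun i => φ i = j)).Nonempty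
    · obtain ⟨i₀, hi₀⟩ := hne2
      obtain ⟨hi₀E, hφ₀⟩ := Finset.mem_filter.mp hi₀
      have hr₀D : R i₀ ∈ Dang M k := (hR i₀ hi₀E).1
      set t : ℝ := (R i₀ - a) / d with htdef
      set b : ℤ := ⌊(t - 2) / 2⌋ with hbdef
      have key : ∀ i ∈ E.filter (fun i => φ i = j), R i = R i₀ ∧ Even i ∧
          t - 2 < (i : ℝ) ∧ (i : ℝ) < t + 1 := by
        intro i hi
        obtain ⟨hiE, hφi⟩ := Finset.mem_filter.mp hi
        have hrD : R i ∈ Dang M k := (hR i hiE).1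
        have hRR : R i = R i₀ := by
          by_contra hcon
          have hsep := sep hrD hr₀D hcon
          have hfl : |((R i - a) / (24 * d)) - ((R i₀ - a) / (24 * d))| < 1 := by
            have e1 : ⌊(R i - a) / (24 * d)⌋ = ⌊(R i₀ - a) / (24 * d)⌋ := hφi.trans hφ₀.symm
            have l1 := Int.floor_le ((R i - a) / (24 * d))
            have l2 := Int.lt_floor_add_one ((R i - a) / (24 * d))
            have l3 := Int.floor_le ((R i₀ - a) / (24 * d))
            have l4 := Int.lt_floor_add_one ((R i₀ - a) / (24 * d))
            rw [e1] at l1 l2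
            rw [abs_lt]
            constructor <;> linarith
          rw [div_sub_div_same, abs_div, abs_of_pos (by positivity : (0:ℝ) < 24 * d),
            div_lt_one (by positivity)] at hfl
          have : (R i - a) - (R i₀ - a) = R i - R i₀ := by ring
          rw [this] at hfl
          linarith [hsep]
        obtain ⟨hi1, hiev, hlo, hhi⟩ := hwin i hiE
        rw [hRR] at hlo hhi
        refine ⟨hRR, hiev, ?_, ?_⟩
        · have : R i₀ - a < (i:ℝ) * d + 2 * d := by linarith
          have ht : t < (i:ℝ) + 2 := by
            rw [htdef, div_lt_iff₀ hd]
            linarith [this]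
          linarith
        · have : (i:ℝ) * d < R i₀ - a + d := by linarith
          have ht : (i:ℝ) < t + 1 := by
            have : (i:ℝ) * d < (t + 1) * d := by
              rw [htdef]
              have : (R i₀ - a) / d * d = R i₀ - a := div_mul_cancel₀ _ (ne_of_gt hd)
              nlinarith [this]
            exact lt_of_mul_lt_mul_right this (le_of_lt hd)
          exact ht
      calc (E.filter (fun i => φ i = j)).card
          ≤ (Finset.Icc (b + 1) (b + 2)).card := by
            apply Finset.card_le_card_of_injOn (fun i => ((i / 2 : ℕ) : ℤ))
            · intro i hi
              obtain ⟨_, hiev, hlo, hhi⟩ := key i hi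
              obtain ⟨u, hu⟩ := hiev
              have hu2 : i / 2 = u := by omega
              simp only [Finset.mem_coe]
              rw [hu2, Finset.mem_Icc]
              have hcast : (i : ℝ) = 2 * (u : ℝ) := by
                rw [hu]; push_cast; ring
              have hbl : (b : ℝ) ≤ (t - 2) / 2 := Int.floor_le _
              have hbu : (t - 2) / 2 < (b : ℝ) + 1 := Int.lt_floor_add_one _
              constructor
              · have : (b : ℝ) < (u : ℝ) := by
                  rw [hcast] at hlo
                  linarith
                have : b < (u : ℤ) := by exact_mod_cast this
                omega
              · have : (u : ℝ) < (b : ℝ) + 1 + 3 / 2 := by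
                  rw [hcast] at hhi
                  linarith
                have : (u : ℤ) < b + 3 := by
                  have h3 : (u : ℝ) < ((b + 3 : ℤ) : ℝ) := by push_cast; linarith
                  exact_mod_cast h3
                omega
            · intro i hi i' hi' hii
              obtain ⟨-, hiev, -, -⟩ := key i hi
              obtain ⟨-, hiev', -, -⟩ := key i' hi'
              obtain ⟨u, hu⟩ := hiev
              obtain ⟨u', hu'⟩ := hiev'
              have hii' : ((i / 2 : ℕ) : ℤ) = ((i' / 2 : ℕ) : ℤ) := hii
              have : i / 2 = i' / 2 := by exact_mod_cast hii'
              omega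
        _ = 2 := by rw [Int.card_Icc]; simp
    · rw [Finset.not_nonempty_iff_eq_empty.mp hne2]
      simp
  have hEcard : E.card ≤ 2 * (M + 2) := by
    have h2 := Finset.card_le_mul_card_image_of_maps_to hmaps 2 hfib
    have : (Finset.Icc (-1 : ℤ) (M : ℤ)).card = M + 2 := by
      rw [Int.card_Icc]
      omega
    omega
  omega

noncomputable def chooser (M : ℕ) (a : ℝ) (k : ℕ) : Fin M → ℕ := fun j =>
  if h : M ≤ (goodSet M a k).card then (goodSet M a k).orderEmbOfCardLe h j else 0

lemma chooser_mem {M : ℕ} (hM : 4 ≤ M) (a : ℝ) (k : ℕ) (j : Fin M) :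
    chooser M a k j < 8 * M ∧ Even (chooser M a k j) ∧ good M a k (chooser M a k j) := by
  classical
  rw [chooser, dif_pos (exists_good hM a k)]
  have hmem := (goodSet M a k).orderEmbOfCardLe_mem (exists_good hM a k) j
  simp only [goodSet, Finset.mem_filter, Finset.mem_range] at hmem
  exact hmem

lemma chooser_inj {M : ℕ} (hM : 4 ≤ M) (a : ℝ) (k : ℕ) :
    Function.Injective (chooser M a k) := by
  intro j j' h
  rw [chooser, dif_pos (exists_good hM a k)] at h
  rw [chooser, dif_pos (exists_good hM a k)] at h
  exact ((goodSet M a k).orderEmbOfCardLe (exists_good hM a k)).injective h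

noncomputable def pt (M : ℕ) (σ : ℕ → Fin M) : ℕ → ℝ
  | 0 => 0
  | k + 1 => pt M σ k + (chooser M (pt M σ k) k (σ k) : ℝ) * del M (k + 1)

lemma pt_step_mem {M : ℕ} (hM : 4 ≤ M) (σ : ℕ → Fin M) (k : ℕ) :
    0 ≤ pt M σ (k + 1) - pt M σ k ∧
    pt M σ (k + 1) - pt M σ k ≤ ((8 * M : ℝ) - 2) * del M (k + 1) := by
  have hM1 : 1 ≤ M := by omega
  have hd := del_pos hM1 (k + 1)
  obtain ⟨hlt, hev, -⟩ := chooser_mem hM (pt M σ k) k (σ k)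
  have hle : (chooser M (pt M σ k) k (σ k) : ℝ) ≤ (8 * M : ℝ) - 2 := by
    have : chooser M (pt M σ k) k (σ k) ≤ 8 * M - 2 := by
      obtain ⟨u, hu⟩ := hev
      omega
    have h2 : ((8 * M - 2 : ℕ) : ℝ) = (8 * M : ℝ) - 2 := by
      have : 2 ≤ 8 * M := by omega
      push_cast [this]
      ring
    calc (chooser M (pt M σ k) k (σ k) : ℝ) ≤ ((8 * M - 2 : ℕ) : ℝ) := by exact_mod_cast this
      _ = (8 * M : ℝ) - 2 := h2
  constructor
  · have : (0:ℝ) ≤ (chooser M (pt M σ k) k (σ k) : ℝ) * del M (k + 1) := by positivity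
    simp only [pt]
    linarith
  · simp only [pt]
    have : (chooser M (pt M σ k) k (σ k) : ℝ) * del M (k + 1) ≤ ((8 * M : ℝ) - 2) * del M (k + 1) := by
      apply mul_le_mul_of_nonneg_right hle (le_of_lt hd)
    linarith

lemma pt_mono {M : ℕ} (hM : 4 ≤ M) (σ : ℕ → Fin M) : Monotone (pt M σ) := by
  apply monotone_nat_of_le_succ
  intro k
  linarith [(pt_step_mem hM σ k).1]

lemma pt_agree {M : ℕ} (σ τ : ℕ → Fin M) (n : ℕ) (h : ∀ j < n, σ j = τ j) :
    pt M σ n = pt M τ n := by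
  induction n with
  | zero => rfl
  | succ k ih =>
    have hk : pt M σ k = pt M τ k := ih (fun j hj => h j (by omega))
    simp only [pt, hk, h k (by omega)]

lemma pt_tail {M : ℕ} (hM : 4 ≤ M) (σ : ℕ → Fin M) (n m : ℕ) :
    pt M σ (n + m) ≤ pt M σ n +
      (((8 * M : ℝ) - 2) / ((8 * M : ℝ) - 1)) * (del M n - del M (n + m)) := by
  have hM1 : 1 ≤ M := by omega
  have hMR : (4:ℝ) ≤ (M:ℝ) := by exact_mod_cast hM
  induction m with
  | zero => simp
  | succ m ih =>
    have hstep := (pt_step_mem hM σ (n + m)).2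
    have hds : del M (n + m + 1) * ((8 * M : ℕ) : ℝ) = del M (n + m) := del_succ hM1 _
    have hcast : ((8 * M : ℕ) : ℝ) = 8 * (M:ℝ) := by push_cast; ring
    rw [hcast] at hds
    have hkey : (((8 * M : ℝ) - 2) / ((8 * M : ℝ) - 1)) * (del M (n + m) - del M (n + m + 1))
        = ((8 * M : ℝ) - 2) * del M (n + m + 1) := by
      have h1 : del M (n + m) - del M (n + m + 1) = del M (n + m + 1) * (8 * (M:ℝ) - 1) := by
        rw [← hds]; ring
      have hne : (8 * (M:ℝ) - 1) ≠ 0 := by linarith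
      rw [h1]
      field_simp
    have : pt M σ (n + (m + 1)) ≤ pt M σ (n + m) + ((8 * M : ℝ) - 2) * del M (n + m + 1) := by
      have : n + (m + 1) = (n + m) + 1 := by omega
      rw [this]
      linarith [hstep]
    calc pt M σ (n + (m + 1)) ≤ pt M σ (n + m) + ((8 * M : ℝ) - 2) * del M (n + m + 1) := this
      _ ≤ pt M σ n + (((8 * M : ℝ) - 2) / ((8 * M : ℝ) - 1)) * (del M n - del M (n + m))
          + ((8 * M : ℝ) - 2) * del M (n + m + 1) := by linarith [ih]
      _ = pt M σ n + (((8 * M : ℝ) - 2) / ((8 * M : ℝ) - 1)) * (del M n - del M (n + m))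
          + (((8 * M : ℝ) - 2) / ((8 * M : ℝ) - 1)) * (del M (n + m) - del M (n + m + 1)) := by
          rw [hkey]
      _ = pt M σ n + (((8 * M : ℝ) - 2) / ((8 * M : ℝ) - 1)) * (del M n - del M (n + (m + 1))) := by
          have : n + (m + 1) = (n + m) + 1 := by omega
          rw [this]
          ring

lemma pt_in_interval {M : ℕ} (hM : 4 ≤ M) (σ : ℕ → Fin M) (n m : ℕ) :
    pt M σ (n + m) ≤ pt M σ n + del M n := by
  have hM1 : 1 ≤ M := by omega
  have hMR : (4:ℝ) ≤ (M:ℝ) := by exact_mod_cast hM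
  have h := pt_tail hM σ n m
  have hd1 : 0 < del M n := del_pos hM1 n
  have hd2 : 0 < del M (n + m) := del_pos hM1 _
  have hc : (0:ℝ) ≤ ((8 * M : ℝ) - 2) / ((8 * M : ℝ) - 1) := by
    apply div_nonneg <;> linarith
  have hc1 : ((8 * M : ℝ) - 2) / ((8 * M : ℝ) - 1) ≤ 1 := by
    rw [div_le_one (by linarith)]
    linarith
  nlinarith [h]

/-- The limit point of the nested construction. -/
noncomputable def limG (M : ℕ) (σ : ℕ → Fin M) : ℝ := ∑' k, (pt M σ (k + 1) - pt M σ k)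

lemma limG_tendsto {M : ℕ} (hM : 4 ≤ M) (σ : ℕ → Fin M) :
    Filter.Tendsto (pt M σ) Filter.atTop (nhds (limG M σ)) := by
  have hsm : Summable (fun k => pt M σ (k + 1) - pt M σ k) := by
    apply summable_of_sum_range_le (c := 1)
    · intro k; linarith [(pt_step_mem hM σ k).1]
    · intro n
      rw [Finset.sum_range_sub (f := pt M σ)]
      have := pt_in_interval hM σ 0 n
      simp only [pt, del, pow_zero, inv_one] at this ⊢
      simpa using this
  have := hsm.hasSum.tendsto_sum_nat
  have heq : ∀ n, ∑ k ∈ Finset.range n, (pt M σ (k + 1) - pt M σ k) = pt M σ n := by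
    intro n
    rw [Finset.sum_range_sub (f := pt M σ)]
    simp [pt]
  rw [show limG M σ = ∑' k, (pt M σ (k + 1) - pt M σ k) from rfl]
  have h2 := this
  refine h2.congr (fun n => heq n)

lemma limG_mem {M : ℕ} (hM : 4 ≤ M) (σ : ℕ → Fin M) (n : ℕ) :
    pt M σ n ≤ limG M σ ∧ limG M σ ≤ pt M σ n + del M n := by
  constructor
  · apply ge_of_tendsto (limG_tendsto hM σ)
    filter_upwards [Filter.eventually_ge_atTop n] with m hm
    exact pt_mono hM σ hm
  · apply le_of_tendsto (limG_tendsto hM σ)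
    filter_upwards [Filter.eventually_ge_atTop n] with m hm
    have : m = n + (m - n) := by omega
    rw [this]
    exact pt_in_interval hM σ n (m - n)

lemma limG_in_chosen {M : ℕ} (hM : 4 ≤ M) (σ : ℕ → Fin M) (k : ℕ) :
    limG M σ ∈ Icc (pt M σ k + (chooser M (pt M σ k) k (σ k) : ℝ) * del M (k + 1))
      (pt M σ k + ((chooser M (pt M σ k) k (σ k) : ℝ) + 1) * del M (k + 1)) := by
  have h := limG_mem hM σ (k + 1)
  have hpt : pt M σ (k + 1) = pt M σ k + (chooser M (pt M σ k) k (σ k) : ℝ) * del M (k + 1) := rfl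
  constructor
  · rw [← hpt]; exact h.1
  · have := h.2
    rw [hpt] at this
    linarith [this]

/-- The limit points are badly approximable with constant `1/(192 M)`. -/
lemma limG_bad {M : ℕ} (hM : 4 ≤ M) (σ : ℕ → Fin M) (p : ℤ) (q : ℕ) (hq : 1 ≤ q) :
    (192 * (M:ℝ))⁻¹ / (q : ℝ) ^ 2 ≤ |limG M σ - (p : ℝ) / (q : ℝ)| := by
  have hM1 : 1 ≤ M := by omega
  have hMR : (4:ℝ) ≤ (M:ℝ) := by exact_mod_cast hM
  have hN2 : 2 ≤ 8 * M := by omega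
  -- find the level k of the denominator q
  have hex : ∃ k : ℕ, 24 * q ^ 2 < (8 * M) ^ (k + 1) := by
    refine ⟨24 * q ^ 2, ?_⟩
    calc 24 * q ^ 2 < 2 ^ (24 * q ^ 2) := Nat.lt_two_pow_self
      _ ≤ (8 * M) ^ (24 * q ^ 2) := Nat.pow_le_pow_left hN2 _
      _ ≤ (8 * M) ^ (24 * q ^ 2 + 1) := Nat.pow_le_pow_right (by omega) (by omega)
  set k := Nat.find hex with hk
  have h1 : 24 * q ^ 2 < (8 * M) ^ (k + 1) := Nat.find_spec hex
  have h2 : (8 * M) ^ k ≤ 24 * q ^ 2 := by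
    rcases Nat.eq_zero_or_pos k with h0 | h0
    · rw [h0, pow_zero]
      have := Nat.one_le_pow 2 q (by omega)
      omega
    · have := Nat.find_min hex (m := k - 1) (by omega)
      push_neg at this
      have hkk : k - 1 + 1 = k := by omega
      rwa [hkk] at this
  have hdang : (p : ℝ) / (q : ℝ) ∈ Dang M k := ⟨p, q, hq, h2, h1, rfl⟩
  have hmem := limG_in_chosen hM σ k
  obtain ⟨-, -, hgood⟩ := chooser_mem hM (pt M σ k) k (σ k)
  have hge : del M (k + 1) ≤ |limG M σ - (p : ℝ) / (q : ℝ)| :=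
    hgood _ hdang _ hmem
  refine le_trans ?_ hge
  -- (192 M)⁻¹ / q² ≤ (8M)^{-(k+1)}  ⇔  (8M)^{k+1} ≤ 24 ⬝ (8M) ⬝ q²
  have hq0 : (0:ℝ) < (q:ℝ) := by exact_mod_cast hq
  have hpow : (0:ℝ) < ((8 * M : ℕ) : ℝ) ^ (k + 1) := by
    have : (0:ℝ) < ((8 * M : ℕ) : ℝ) := N_cast_pos hM1
    positivity
  have hcast : (((8 * M) ^ (k + 1) : ℕ) : ℝ) ≤ ((24 * q ^ 2 * (8 * M) : ℕ) : ℝ) := by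
    have : (8 * M) ^ (k + 1) ≤ 24 * q ^ 2 * (8 * M) := by
      calc (8 * M) ^ (k + 1) = (8 * M) ^ k * (8 * M) := by ring
        _ ≤ 24 * q ^ 2 * (8 * M) := Nat.mul_le_mul_right _ h2
    exact_mod_cast this
  push_cast at hcast
  rw [del, div_eq_mul_inv, ← mul_inv]
  apply inv_anti₀
  · exact hpow
  · push_cast
    nlinarith [hcast]

lemma limG_sep {M : ℕ} (hM : 4 ≤ M) {σ τ : ℕ → Fin M} {k : ℕ}
    (hagree : ∀ j < k, σ j = τ j) (hk : σ k ≠ τ k) :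
    del M (k + 1) ≤ |limG M σ - limG M τ| := by
  have hM1 : 1 ≤ M := by omega
  have hd := del_pos hM1 (k + 1)
  have hA : pt M σ k = pt M τ k := pt_agree σ τ k hagree
  set a := pt M σ k with ha
  set i := chooser M a k (σ k) with hi
  set i' := chooser M a k (τ k) with hi'
  have hii : i ≠ i' := fun h => hk (chooser_inj hM a k h)
  obtain ⟨-, hev, -⟩ := chooser_mem hM a k (σ k)
  obtain ⟨-, hev', -⟩ := chooser_mem hM a k (τ k)
  have hmσ := limG_in_chosen hM σ k
  have hmτ := limG_in_chosen hM τ k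
  rw [← hA] at hmτ
  rw [← hi] at hmσ
  rw [← hi'] at hmτ
  -- i and i' are distinct even numbers, so they differ by at least 2
  obtain ⟨u, hu⟩ := hev
  obtain ⟨u', hu'⟩ := hev'
  rcases lt_or_gt_of_ne hii with hlt | hlt
  · have h2 : i + 2 ≤ i' := by omega
    have h2R : (i:ℝ) + 2 ≤ (i':ℝ) := by exact_mod_cast h2
    have := hmσ.2
    have := hmτ.1
    rw [abs_sub_comm, abs_of_nonneg (by nlinarith : (0:ℝ) ≤ limG M τ - limG M σ)]
    nlinarith
  · have h2 : i' + 2 ≤ i := by omega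
    have h2R : (i':ℝ) + 2 ≤ (i:ℝ) := by exact_mod_cast h2
    have := hmτ.2
    have := hmσ.1
    rw [abs_of_nonneg (by nlinarith : (0:ℝ) ≤ limG M σ - limG M τ)]
    nlinarith

lemma limG_inj {M : ℕ} (hM : 4 ≤ M) : Function.Injective (limG M) := by
  intro σ τ h
  by_contra hne
  have hex : ∃ k, σ k ≠ τ k := by
    by_contra hc
    push_neg at hc
    exact hne (funext hc)
  set k := Nat.find hex with hk
  have h1 : σ k ≠ τ k := Nat.find_spec hex
  have h2 : ∀ j < k, σ j = τ j := by
    intro j hj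
    by_contra hc
    exact absurd (Nat.find_min hex hj) (fun h => h hc)
  have := limG_sep hM h2 h1
  rw [h] at this
  simp at this
  have hM1 : 1 ≤ M := by omega
  linarith [del_pos hM1 (k + 1), this]

/-- Base-`M` value of a digit sequence. -/
noncomputable def V (M : ℕ) (σ : ℕ → Fin M) : ℝ := ∑' k, (σ k : ℝ) * (((M : ℝ)) ^ (k + 1))⁻¹

section Vfacts

variable {M : ℕ}

lemma MR_pos (hM : 4 ≤ M) : (0:ℝ) < (M:ℝ) := by
  have : (4:ℝ) ≤ (M:ℝ) := by exact_mod_cast hM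
  linarith

lemma MR4 (hM : 4 ≤ M) : (4:ℝ) ≤ (M:ℝ) := by exact_mod_cast hM

lemma Minv_lt_one (hM : 4 ≤ M) : (M:ℝ)⁻¹ < 1 := by
  have := MR4 hM
  rw [inv_lt_one_iff₀]
  right; linarith

lemma V_term_le (hM : 4 ≤ M) (σ : ℕ → Fin M) (k : ℕ) :
    0 ≤ (σ k : ℝ) * (((M : ℝ)) ^ (k + 1))⁻¹ ∧
    (σ k : ℝ) * (((M : ℝ)) ^ (k + 1))⁻¹ ≤ ((M:ℝ) - 1) * (((M : ℝ)) ^ (k + 1))⁻¹ := by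
  have hMpos := MR_pos hM
  have h1 : (0:ℝ) ≤ (σ k : ℝ) := by positivity
  have h2 : (σ k : ℝ) ≤ (M:ℝ) - 1 := by
    have h3 : (σ k : ℕ) + 1 ≤ M := (σ k).2
    have h4 : ((σ k : ℕ) : ℝ) + 1 ≤ (M:ℝ) := by exact_mod_cast h3
    linarith
  exact ⟨by positivity, mul_le_mul_of_nonneg_right h2 (by positivity)⟩

lemma geom_shift (hM : 4 ≤ M) (n : ℕ) :
    (fun j : ℕ => ((M:ℝ) - 1) * (((M : ℝ)) ^ (j + n + 1))⁻¹)
      = fun j : ℕ => (((M:ℝ) - 1) * (((M : ℝ)) ^ (n + 1))⁻¹) * ((M:ℝ)⁻¹) ^ j := by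
  have hMpos := MR_pos hM
  funext j
  rw [show j + n + 1 = (n + 1) + j by omega, pow_add, mul_inv, inv_pow]
  ring

lemma geom_summable (hM : 4 ≤ M) (n : ℕ) :
    Summable (fun j : ℕ => ((M:ℝ) - 1) * (((M : ℝ)) ^ (j + n + 1))⁻¹) := by
  rw [geom_shift hM n]
  exact (summable_geometric_of_lt_one (by positivity) (Minv_lt_one hM)).mul_left _

lemma V_summable (hM : 4 ≤ M) (σ : ℕ → Fin M) :
    Summable (fun k => (σ k : ℝ) * (((M : ℝ)) ^ (k + 1))⁻¹) := by
  apply Summable.of_nonneg_of_le (fun k => (V_term_le hM σ k).1)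
    (fun k => (V_term_le hM σ k).2)
  simpa using geom_summable hM 0

lemma geom_tail_eq (hM : 4 ≤ M) (n : ℕ) :
    ∑' (j : ℕ), ((M:ℝ) - 1) * (((M : ℝ)) ^ (j + n + 1))⁻¹ = (((M:ℝ)) ^ n)⁻¹ := by
  have hMpos := MR_pos hM
  have hM4 := MR4 hM
  rw [geom_shift hM n, tsum_mul_left,
    tsum_geometric_of_lt_one (by positivity) (Minv_lt_one hM)]
  have h2 : (1 - (M:ℝ)⁻¹) = ((M:ℝ) - 1) / (M:ℝ) := by
    field_simp
  have hne : (M:ℝ) - 1 ≠ 0 := by linarith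
  have hMne : (M:ℝ) ≠ 0 := by linarith
  rw [h2, inv_div, pow_succ]
  field_simp

lemma V_tail_bounds (hM : 4 ≤ M) (σ : ℕ → Fin M) (n : ℕ) :
    0 ≤ ∑' (j : ℕ), ((σ (j + n) : ℝ) * (((M : ℝ)) ^ (j + n + 1))⁻¹) ∧
    ∑' (j : ℕ), ((σ (j + n) : ℝ) * (((M : ℝ)) ^ (j + n + 1))⁻¹) ≤ (((M:ℝ)) ^ n)⁻¹ := by
  have hsum : Summable (fun j => (σ (j + n) : ℝ) * (((M : ℝ)) ^ (j + n + 1))⁻¹) := by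
    have := (V_summable hM σ).comp_injective (add_left_injective n)
    exact this
  constructor
  · exact tsum_nonneg (fun j => (V_term_le hM σ (j + n)).1)
  · calc ∑' (j : ℕ), ((σ (j + n) : ℝ) * (((M : ℝ)) ^ (j + n + 1))⁻¹)
        ≤ ∑' (j : ℕ), ((M:ℝ) - 1) * (((M : ℝ)) ^ (j + n + 1))⁻¹ :=
          Summable.tsum_le_tsum (fun j => (V_term_le hM σ (j + n)).2) hsum (geom_summable hM n)
      _ = (((M:ℝ)) ^ n)⁻¹ := geom_tail_eq hM n

lemma V_split (hM : 4 ≤ M) (σ : ℕ → Fin M) (n : ℕ) :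
    V M σ = (∑ k ∈ Finset.range n, (σ k : ℝ) * (((M : ℝ)) ^ (k + 1))⁻¹)
      + ∑' (j : ℕ), ((σ (j + n) : ℝ) * (((M : ℝ)) ^ (j + n + 1))⁻¹) := by
  rw [V, ← Summable.sum_add_tsum_nat_add n (V_summable hM σ)]

lemma V_agree (hM : 4 ≤ M) {σ τ : ℕ → Fin M} {n : ℕ} (h : ∀ j < n, σ j = τ j) :
    |V M σ - V M τ| ≤ (((M:ℝ)) ^ n)⁻¹ := by
  have h1 := V_split hM σ n
  have h2 := V_split hM τ n
  have hS : (∑ k ∈ Finset.range n, (σ k : ℝ) * (((M : ℝ)) ^ (k + 1))⁻¹)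
      = (∑ k ∈ Finset.range n, (τ k : ℝ) * (((M : ℝ)) ^ (k + 1))⁻¹) := by
    apply Finset.sum_congr rfl
    intro k hk
    rw [h k (Finset.mem_range.mp hk)]
  obtain ⟨ht1a, ht1b⟩ := V_tail_bounds hM σ n
  obtain ⟨ht2a, ht2b⟩ := V_tail_bounds hM τ n
  rw [h1, h2, hS, abs_le]
  constructor <;> linarith

lemma V_surj (hM : 4 ≤ M) {y : ℝ} (hy : y ∈ Ico (0:ℝ) 1) : ∃ σ : ℕ → Fin M, V M σ = y := by
  have hMpos := MR_pos hM
  set fl : ℕ → ℤ := fun k => ⌊y * (M:ℝ) ^ k⌋ with hfl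
  have hfl0 : fl 0 = 0 := by
    simp only [hfl, pow_zero, mul_one]
    exact Int.floor_eq_zero_iff.mpr (by simpa using hy)
  have hkey : ∀ k, (M:ℤ) * fl k ≤ fl (k + 1) ∧ fl (k + 1) < (M:ℤ) * fl k + M := by
    intro k
    have hle := Int.floor_le (y * (M:ℝ) ^ k)
    have hlt := Int.lt_floor_add_one (y * (M:ℝ) ^ k)
    constructor
    · apply Int.le_floor.mpr
      push_cast
      calc (M:ℝ) * (fl k : ℝ) ≤ (M:ℝ) * (y * (M:ℝ) ^ k) :=
            mul_le_mul_of_nonneg_left hle (le_of_lt hMpos)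
        _ = y * (M:ℝ) ^ (k + 1) := by ring
    · apply Int.floor_lt.mpr
      push_cast
      calc y * (M:ℝ) ^ (k + 1) = (M:ℝ) * (y * (M:ℝ) ^ k) := by ring
        _ < (M:ℝ) * ((fl k : ℝ) + 1) := mul_lt_mul_of_pos_left hlt hMpos
        _ = (M:ℝ) * (fl k : ℝ) + M := by ring
  set d : ℕ → ℕ := fun k => (fl (k + 1) - (M:ℤ) * fl k).toNat with hd
  have hdlt : ∀ k, d k < M := by
    intro k
    have := hkey k
    simp only [hd]
    omega
  set σ : ℕ → Fin M := fun k => ⟨d k, hdlt k⟩ with hσ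
  have hdcast : ∀ k, ((σ k : ℕ) : ℝ) = (fl (k + 1) : ℝ) - (M:ℝ) * (fl k : ℝ) := by
    intro k
    have h1 := (hkey k).1
    have h3 : ((fl (k + 1) - (M:ℤ) * fl k).toNat : ℤ) = fl (k + 1) - (M:ℤ) * fl k := by omega
    have h2 : (((fl (k + 1) - (M:ℤ) * fl k).toNat : ℤ) : ℝ)
        = ((fl (k + 1) - (M:ℤ) * fl k : ℤ) : ℝ) := by exact_mod_cast h3
    push_cast at h2
    simp only [hσ, hd]
    push_cast
    linarith [h2]
  have hpartial : ∀ n, (∑ k ∈ Finset.range n, (σ k : ℝ) * (((M : ℝ)) ^ (k + 1))⁻¹)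
      = (fl n : ℝ) / (M:ℝ) ^ n := by
    intro n
    induction n with
    | zero => simp [hfl0]
    | succ n ih =>
      rw [Finset.sum_range_succ, ih, hdcast n]
      have hMn : ((M:ℝ)) ^ n ≠ 0 := by positivity
      have hMn1 : ((M:ℝ)) ^ (n + 1) ≠ 0 := by positivity
      field_simp
      ring
  refine ⟨σ, ?_⟩
  have hb : ∀ n : ℕ, |(∑ k ∈ Finset.range n, (σ k : ℝ) * (((M : ℝ)) ^ (k + 1))⁻¹) - y|
      ≤ ((M:ℝ)⁻¹) ^ n := by
    intro n
    have hle := Int.floor_le (y * (M:ℝ) ^ n)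
    have hlt := Int.lt_floor_add_one (y * (M:ℝ) ^ n)
    have hMn : (0:ℝ) < ((M:ℝ)) ^ n := by positivity
    have e2 : (fl n:ℝ)/(M:ℝ)^n - y = ((fl n:ℝ) - y*(M:ℝ)^n)/(M:ℝ)^n := by
      field_simp
    rw [hpartial n, e2, abs_div, abs_of_pos hMn, div_le_iff₀ hMn, inv_pow,
      inv_mul_cancel₀ (ne_of_gt hMn), abs_le]
    constructor <;> (first | linarith [hle] | linarith [hlt])
  have htends : Filter.Tendsto
      (fun n => ∑ k ∈ Finset.range n, (σ k : ℝ) * (((M : ℝ)) ^ (k + 1))⁻¹)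
      Filter.atTop (nhds y) := by
    have hgeo : Filter.Tendsto (fun n : ℕ => ((M:ℝ)⁻¹) ^ n) Filter.atTop (nhds 0) :=
      tendsto_pow_atTop_nhds_zero_of_lt_one (by positivity) (Minv_lt_one hM)
    rw [tendsto_iff_dist_tendsto_zero]
    apply squeeze_zero (fun n => dist_nonneg) _ hgeo
    intro n
    rw [Real.dist_eq]
    exact hb n
  have hhs : HasSum (fun k => (σ k : ℝ) * (((M : ℝ)) ^ (k + 1))⁻¹) y :=
    ((V_summable hM σ).hasSum_iff_tendsto_nat).mpr htends
  rw [V]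
  exact hhs.tsum_eq

end Vfacts

/-- The Hölder "reading of digits" map from the Cantor set to `[0,1]`. -/
noncomputable def hmap (M : ℕ) : ℝ → ℝ := Function.extend (limG M) (V M) (fun _ => 0)

lemma hmap_limG {M : ℕ} (hM : 4 ≤ M) (σ : ℕ → Fin M) : hmap M (limG M σ) = V M σ :=
  (limG_inj hM).extend_apply (V M) _ σ

lemma holder_exp_pos {M : ℕ} (hM : 4 ≤ M) :
    0 < Real.logb ((8 * M : ℕ) : ℝ) (M : ℝ) := by
  have h1 : (1:ℝ) < ((8 * M : ℕ) : ℝ) := by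
    have : (1:ℕ) < 8 * M := by omega
    exact_mod_cast this
  have h2 : (1:ℝ) < (M : ℝ) := by
    have : (1:ℕ) < M := by omega
    exact_mod_cast this
  exact Real.logb_pos h1 h2

lemma rpow_key {M : ℕ} (hM : 4 ≤ M) (k : ℕ) :
    (del M (k + 1)) ^ (Real.logb ((8 * M : ℕ) : ℝ) (M : ℝ)) = (((M:ℝ)) ^ (k + 1))⁻¹ := by
  have hM1 : 1 ≤ M := by omega
  set B := ((8 * M : ℕ) : ℝ) with hB
  have hBpos : 0 < B := N_cast_pos hM1
  have hBne1 : B ≠ 1 := by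
    have : (1:ℕ) < 8 * M := by omega
    have h2 : (1:ℝ) < B := by rw [hB]; exact_mod_cast this
    linarith
  have hMpos := MR_pos hM
  set α := Real.logb B (M : ℝ) with hα
  have hbase : B ^ α = (M:ℝ) := Real.rpow_logb hBpos hBne1 hMpos
  rw [del, ← Real.rpow_natCast B (k + 1), Real.inv_rpow (Real.rpow_nonneg (le_of_lt hBpos) _),
    ← Real.rpow_mul (le_of_lt hBpos), mul_comm, Real.rpow_mul (le_of_lt hBpos),
    hbase, Real.rpow_natCast]

lemma holder_on {M : ℕ} (hM : 4 ≤ M) :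
    HolderOnWith (M : ℝ≥0) (Real.toNNReal (Real.logb ((8 * M : ℕ) : ℝ) (M : ℝ)))
      (hmap M) (Set.range (limG M)) := by
  have hM1 : 1 ≤ M := by omega
  have hMpos := MR_pos hM
  set α := Real.logb ((8 * M : ℕ) : ℝ) (M : ℝ) with hα
  have hαpos := holder_exp_pos hM
  intro x hx y hy
  obtain ⟨σ, rfl⟩ := hx
  obtain ⟨τ, rfl⟩ := hy
  rcases eq_or_ne σ τ with rfl | hne
  · simp
  have hex : ∃ k, σ k ≠ τ k := by
    by_contra hc
    push_neg at hc
    exact hne (funext hc)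
  set k := Nat.find hex with hk
  have h1 : σ k ≠ τ k := Nat.find_spec hex
  have h2 : ∀ j < k, σ j = τ j := by
    intro j hj
    by_contra hc
    exact absurd (Nat.find_min hex hj) (fun h => h hc)
  have hV : |V M σ - V M τ| ≤ (((M:ℝ)) ^ k)⁻¹ := V_agree hM h2
  have hG : del M (k + 1) ≤ |limG M σ - limG M τ| := limG_sep hM h2 h1
  have hdpos := del_pos hM1 (k + 1)
  -- the key real inequality
  have hkeyR : |V M σ - V M τ| ≤ (M:ℝ) * |limG M σ - limG M τ| ^ α := by
    have hmono : (del M (k + 1)) ^ α ≤ |limG M σ - limG M τ| ^ α :=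
      Real.rpow_le_rpow (le_of_lt hdpos) hG (le_of_lt hαpos)
    rw [rpow_key hM k] at hmono
    have hcalc : (((M:ℝ)) ^ k)⁻¹ = (M:ℝ) * (((M:ℝ)) ^ (k + 1))⁻¹ := by
      rw [pow_succ]
      field_simp
    calc |V M σ - V M τ| ≤ (((M:ℝ)) ^ k)⁻¹ := hV
      _ = (M:ℝ) * (((M:ℝ)) ^ (k + 1))⁻¹ := hcalc
      _ ≤ (M:ℝ) * |limG M σ - limG M τ| ^ α := by
          apply mul_le_mul_of_nonneg_left hmono (le_of_lt hMpos)
  -- translate to edist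
  rw [hmap_limG hM σ, hmap_limG hM τ, edist_dist, edist_dist, Real.dist_eq, Real.dist_eq]
  have hcoe : ((Real.toNNReal α : ℝ≥0) : ℝ) = α := Real.coe_toNNReal _ (le_of_lt hαpos)
  rw [ENNReal.ofReal_rpow_of_nonneg (abs_nonneg _) (by rw [hcoe]; exact le_of_lt hαpos), hcoe]
  have hcM : ((M : ℝ≥0) : ℝ≥0∞) = ENNReal.ofReal (M:ℝ) := by
    simp [ENNReal.ofReal_natCast]
  rw [hcM, ← ENNReal.ofReal_mul (le_of_lt hMpos)]
  exact ENNReal.ofReal_le_ofReal hkeyR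

/-- The set of badly approximable numbers. -/
def BadSet : Set ℝ :=
  {x : ℝ | ∃ c : ℝ, 0 < c ∧ ∀ (p : ℤ) (q : ℕ), 1 ≤ q →
    c / (q : ℝ) ^ 2 ≤ |x - (p : ℝ) / (q : ℝ)|}

lemma range_subset_bad {M : ℕ} (hM : 4 ≤ M) : Set.range (limG M) ⊆ BadSet := by
  rintro x ⟨σ, rfl⟩
  refine ⟨(192 * (M:ℝ))⁻¹, by positivity, ?_⟩
  intro p q hq
  have := limG_bad hM σ p q hq
  calc (192 * (M:ℝ))⁻¹ / (q : ℝ) ^ 2 ≤ (192 * (M:ℝ))⁻¹ / (q : ℝ) ^ 2 := le_refl _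
    _ ≤ |limG M σ - (p : ℝ) / (q : ℝ)| := this

lemma dimH_lower {M : ℕ} (hM : 4 ≤ M) :
    (Real.toNNReal (Real.logb ((8 * M : ℕ) : ℝ) (M : ℝ)) : ℝ≥0∞) ≤ dimH BadSet := by
  set r : ℝ≥0 := Real.toNNReal (Real.logb ((8 * M : ℕ) : ℝ) (M : ℝ)) with hr
  have hrpos : 0 < r := Real.toNNReal_pos.mpr (holder_exp_pos hM)
  set K := Set.range (limG M) with hK
  have h1 : dimH (hmap M '' K) ≤ dimH K / r := (holder_on hM).dimH_image_le hrpos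
  have h2 : Set.Ico (0:ℝ) 1 ⊆ hmap M '' K := by
    intro y hy
    obtain ⟨σ, hσ⟩ := V_surj hM hy
    exact ⟨limG M σ, Set.mem_range_self σ, by rw [hmap_limG hM σ, hσ]⟩
  have h3 : dimH (Set.Ico (0:ℝ) 1) = 1 := by
    rw [Real.dimH_of_nonempty_interior (E := ℝ)]
    · simp
    · rw [interior_Ico]
      exact ⟨1/2, by norm_num⟩
  have h4 : (1:ℝ≥0∞) ≤ dimH K / r := by
    calc (1:ℝ≥0∞) = dimH (Set.Ico (0:ℝ) 1) := h3.symm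
      _ ≤ dimH (hmap M '' K) := dimH_mono h2
      _ ≤ dimH K / r := h1
  have h5 : (r : ℝ≥0∞) ≤ dimH K := by
    have := (ENNReal.le_div_iff_mul_le (Or.inl (by exact_mod_cast hrpos.ne'))
      (Or.inl ENNReal.coe_ne_top)).mp h4
    rwa [one_mul] at this
  exact h5.trans (dimH_mono (range_subset_bad hM))

end JarnikAux

theorem jarnik_dimH_bad_eq_one' : dimH JarnikAux.BadSet = 1 := by
  apply le_antisymm
  · exact (dimH_mono (Set.subset_univ _)).trans (le_of_eq Real.dimH_univ)
  · by_contra hlt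
    push_neg at hlt
    have hne : dimH JarnikAux.BadSet ≠ ⊤ := by
      intro h
      rw [h] at hlt
      exact absurd hlt (by simp)
    set t : ℝ := (dimH JarnikAux.BadSet).toReal with ht
    have ht1 : t < 1 := by
      have := (ENNReal.toReal_lt_toReal hne ENNReal.one_ne_top).mpr hlt
      simpa using this
    have ht0 : 0 ≤ t := ENNReal.toReal_nonneg
    obtain ⟨n₀, hn₀⟩ := exists_nat_gt (t / (1 - t))
    set n := n₀ + 1 with hn
    have hnt : t < (n:ℝ) / ((n:ℝ) + 1) := by
      have h1t : (0:ℝ) < 1 - t := by linarith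
      have hngt : t / (1 - t) < (n:ℝ) := by
        have : (n₀:ℝ) ≤ (n:ℝ) := by exact_mod_cast Nat.le_succ n₀
        linarith
      rw [div_lt_iff₀ h1t] at hngt
      rw [lt_div_iff₀ (by positivity : (0:ℝ) < (n:ℝ) + 1)]
      nlinarith
    set M := 8 ^ n with hM
    have hM4 : 4 ≤ M := by
      have : 8 ^ 1 ≤ 8 ^ n := Nat.pow_le_pow_right (by omega) (by omega)
      simpa [hM] using by omega
    have hlog : Real.logb ((8 * M : ℕ) : ℝ) (M : ℝ) = (n:ℝ) / ((n:ℝ) + 1) := by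
      have hcast : ((8 * M : ℕ) : ℝ) = (8:ℝ) ^ (n + 1) := by
        rw [hM]
        push_cast
        ring
      have hcast2 : ((M : ℕ) : ℝ) = (8:ℝ) ^ n := by
        rw [hM]; push_cast; ring
      rw [hcast, hcast2, Real.logb, Real.log_pow, Real.log_pow]
      have hlog8 : Real.log 8 ≠ 0 := ne_of_gt (Real.log_pos (by norm_num))
      field_simp
      push_cast
      ring
    have hlower := JarnikAux.dimH_lower hM4
    rw [hlog] at hlower
    have hcontra : dimH JarnikAux.BadSet < (Real.toNNReal ((n:ℝ) / ((n:ℝ) + 1)) : ℝ≥0∞) := by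
      have he : (Real.toNNReal ((n:ℝ) / ((n:ℝ) + 1)) : ℝ≥0∞)
          = ENNReal.ofReal ((n:ℝ) / ((n:ℝ) + 1)) := rfl
      rw [he]
      calc dimH JarnikAux.BadSet = ENNReal.ofReal t := by
            rw [ht, ENNReal.ofReal_toReal hne]
        _ < ENNReal.ofReal ((n:ℝ) / ((n:ℝ) + 1)) := by
            apply (ENNReal.ofReal_lt_ofReal_iff (by positivity)).mpr hnt
    exact absurd hlower (not_le.mpr hcontra)


/-- (Jarník) The set of badly approximable real numbers, i.e. the set of `x : ℝ` for which
there exists `c > 0` such that `|x - p/q| ≥ c / q ^ 2` for all rationals `p / q` with `p : ℤ`,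
`q : ℕ`, `q ≥ 1`, has Hausdorff dimension `1`. -/
theorem jarnik_dimH_bad_eq_one :
    dimH {x : ℝ | ∃ c : ℝ, 0 < c ∧ ∀ (p : ℤ) (q : ℕ), 1 ≤ q →
      c / (q : ℝ) ^ 2 ≤ |x - (p : ℝ) / (q : ℝ)|} = 1 := by
  exact jarnik_dimH_bad_eq_one'
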